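/- arXiv:1601.00131 — 3 statements merged into one kernel-verified Lean document; each statement's English description precedes it below -/
import Mathlib

section
/- Under hypotheses (γ) and (A1), let φ : E → ℝ be defined by φ(u) = ∑_{t=1}^T [ γ₁(t)Φ₁(Δu₁(t)) + γ₂(t)Φ₂(Δu₂(t)) + γ₃(t)Φ₃(u₁(t)) + γ₄(t)Φ₄(u₂(t)) − F(t,u₁(t),u₂(t)) ]. If u = (u₁,u₂) ∈ E satisfies φ'(u) = 0, then u is a T-periodic solution of the system Δ[γ₁(t−1)φ₁(Δu₁(t−1))] − γ₃(t)φ₃(u₁(t)) + ∇_{x₁}F(t,u₁(t),u₂(t)) = 0, Δ[γ₂(t−1)φ₂(Δu₂(t−1))] − γ₄(t)φ₄(u₂(t)) + ∇_{x₂}F(t,u₁(t),u₂(t)) = 0 for all t ∈ ℤ. -/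
/- STATEMENT 5 (Lemma 4.1): under (γ) and (A1), if `u ∈ E` satisfies `φ'(u) = 0`, where
`φ(u) = ∑_{t=1}^T [γ₁Φ₁(Δu₁) + γ₂Φ₂(Δu₂) + γ₃Φ₃(u₁) + γ₄Φ₄(u₂) − F(t,u₁,u₂)]`,
then `u` solves the difference system
`Δ[γ₁(t−1)φ₁(Δu₁(t−1))] − γ₃(t)φ₃(u₁(t)) + ∇_{x₁}F(t,u₁(t),u₂(t)) = 0`,
`Δ[γ₂(t−1)φ₂(Δu₂(t−1))] − γ₄(t)φ₄(u₂(t)) + ∇_{x₂}F(t,u₁(t),u₂(t)) = 0`.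
The space `E` of pairs of `T`-periodic sequences is modelled as
`(ZMod T → ℝ^N) × (ZMod T → ℝ^N)`. -/

noncomputable section

abbrev Rn (N : ℕ) := EuclideanSpace ℝ (Fin N)

abbrev ESpace (T N : ℕ) [NeZero T] := (ZMod T → Rn N) × (ZMod T → Rn N)

/-- The functional `φ` of Lemma 4.1. -/
def actionFun (T N : ℕ) [NeZero T]
    (γ : Fin 4 → ZMod T → ℝ) (Φv : Fin 4 → Rn N → ℝ)
    (F : ZMod T → Rn N → Rn N → ℝ) (u : ESpace T N) : ℝ :=
  ∑ t : ZMod T,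
    (γ 0 t * Φv 0 (u.1 (t + 1) - u.1 t) + γ 1 t * Φv 1 (u.2 (t + 1) - u.2 t)
      + γ 2 t * Φv 2 (u.1 t) + γ 3 t * Φv 3 (u.2 t)
      - F t (u.1 t) (u.2 t))

/-! ### Auxiliary material -/

lemma grad_inner {n : ℕ} (f : Rn n → ℝ) (x a : Rn n) :
    (inner ℝ (gradient f x) a : ℝ) = fderiv ℝ f x a := by
  rw [gradient]; exact InnerProductSpace.toDual_symm_apply

/-- Evaluation of the first component at `t`, as a continuous linear map. -/
def ev1 (T N : ℕ) [NeZero T] (t : ZMod T) : ESpace T N →L[ℝ] Rn N :=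
  (ContinuousLinearMap.proj t).comp (ContinuousLinearMap.fst ℝ _ _)

/-- Evaluation of the second component at `t`, as a continuous linear map. -/
def ev2 (T N : ℕ) [NeZero T] (t : ZMod T) : ESpace T N →L[ℝ] Rn N :=
  (ContinuousLinearMap.proj t).comp (ContinuousLinearMap.snd ℝ _ _)

@[simp] lemma ev1_apply (T N : ℕ) [NeZero T] (t : ZMod T) (u : ESpace T N) :
    ev1 T N t u = u.1 t := rfl

@[simp] lemma ev2_apply (T N : ℕ) [NeZero T] (t : ZMod T) (u : ESpace T N) :
    ev2 T N t u = u.2 t := rfl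

/-- The explicit Fréchet derivative of `actionFun` at `u`. -/
def dAction (T N : ℕ) [NeZero T]
    (γ : Fin 4 → ZMod T → ℝ) (Φv : Fin 4 → Rn N → ℝ)
    (F : ZMod T → Rn N → Rn N → ℝ) (u : ESpace T N) : ESpace T N →L[ℝ] ℝ :=
  ∑ t : ZMod T,
    (γ 0 t • ((fderiv ℝ (Φv 0) (u.1 (t+1) - u.1 t)).comp (ev1 T N (t+1) - ev1 T N t))
     + γ 1 t • ((fderiv ℝ (Φv 1) (u.2 (t+1) - u.2 t)).comp (ev2 T N (t+1) - ev2 T N t))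
     + γ 2 t • ((fderiv ℝ (Φv 2) (u.1 t)).comp (ev1 T N t))
     + γ 3 t • ((fderiv ℝ (Φv 3) (u.2 t)).comp (ev2 T N t))
     - (fderiv ℝ (fun p : Rn N × Rn N => F t p.1 p.2) (u.1 t, u.2 t)).comp
         ((ev1 T N t).prod (ev2 T N t)))

lemma hasFDeriv_action (T N : ℕ) [NeZero T]
    (γ : Fin 4 → ZMod T → ℝ) (Φv : Fin 4 → Rn N → ℝ)
    (F : ZMod T → Rn N → Rn N → ℝ)
    (hΦC1 : ∀ i, ContDiff ℝ 1 (Φv i))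
    (hFC1 : ∀ t, ContDiff ℝ 1 (fun p : Rn N × Rn N => F t p.1 p.2))
    (u : ESpace T N) :
    HasFDerivAt (actionFun T N γ Φv F) (dAction T N γ Φv F u) u := by
  apply HasFDerivAt.fun_sum
  intro t _
  have h0 : HasFDerivAt (fun u' : ESpace T N => Φv 0 (u'.1 (t+1) - u'.1 t))
      ((fderiv ℝ (Φv 0) (u.1 (t+1) - u.1 t)).comp (ev1 T N (t+1) - ev1 T N t)) u :=
    (((hΦC1 0).differentiable one_ne_zero _).hasFDerivAt).comp u (ev1 T N (t+1) - ev1 T N t).hasFDerivAt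
  have h1 : HasFDerivAt (fun u' : ESpace T N => Φv 1 (u'.2 (t+1) - u'.2 t))
      ((fderiv ℝ (Φv 1) (u.2 (t+1) - u.2 t)).comp (ev2 T N (t+1) - ev2 T N t)) u :=
    (((hΦC1 1).differentiable one_ne_zero _).hasFDerivAt).comp u (ev2 T N (t+1) - ev2 T N t).hasFDerivAt
  have h2 : HasFDerivAt (fun u' : ESpace T N => Φv 2 (u'.1 t))
      ((fderiv ℝ (Φv 2) (u.1 t)).comp (ev1 T N t)) u :=
    (((hΦC1 2).differentiable one_ne_zero _).hasFDerivAt).comp u (ev1 T N t).hasFDerivAt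
  have h3 : HasFDerivAt (fun u' : ESpace T N => Φv 3 (u'.2 t))
      ((fderiv ℝ (Φv 3) (u.2 t)).comp (ev2 T N t)) u :=
    (((hΦC1 3).differentiable one_ne_zero _).hasFDerivAt).comp u (ev2 T N t).hasFDerivAt
  have hF : HasFDerivAt (fun u' : ESpace T N => F t (u'.1 t) (u'.2 t))
      ((fderiv ℝ (fun p : Rn N × Rn N => F t p.1 p.2) (u.1 t, u.2 t)).comp
        ((ev1 T N t).prod (ev2 T N t))) u :=
    (((hFC1 t).differentiable one_ne_zero _).hasFDerivAt).comp u ((ev1 T N t).prod (ev2 T N t)).hasFDerivAt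
  exact ((((h0.const_mul (γ 0 t)).add (h1.const_mul (γ 1 t))).add
    (h2.const_mul (γ 2 t))).add (h3.const_mul (γ 3 t))).sub hF

set_option maxHeartbeats 1000000 in
theorem critical_point_is_solution' (T N : ℕ) [NeZero T] (hT : 1 < T) (hN : 0 < N)
    (γ : Fin 4 → ZMod T → ℝ) (φv : Fin 4 → Rn N → Rn N) (Φv : Fin 4 → Rn N → ℝ)
    (F : ZMod T → Rn N → Rn N → ℝ)
    -- hypothesis (γ)
    (hγpos : ∀ i t, 0 < γ i t)
    -- hypothesis (A1)
    (hφhomeo : ∀ i, IsHomeomorph (φv i))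
    (hφzero : ∀ i, φv i 0 = 0)
    (hφgrad : ∀ i, ∀ x : Rn N, φv i x = gradient (Φv i) x)
    (hΦC1 : ∀ i, ContDiff ℝ 1 (Φv i))
    (hΦnonneg : ∀ i, ∀ x : Rn N, 0 ≤ Φv i x)
    (hΦconv : ∀ i, StrictConvexOn ℝ Set.univ (Φv i))
    (hΦzero : ∀ i, Φv i 0 = 0)
    -- `F` is `C¹` in `(x₁,x₂)`
    (hFC1 : ∀ t, ContDiff ℝ 1 (fun p : Rn N × Rn N => F t p.1 p.2))
    (u : ESpace T N)
    (hu : fderiv ℝ (actionFun T N γ Φv F) u = 0) :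
    (∀ t : ZMod T,
      (γ 0 t • φv 0 (u.1 (t + 1) - u.1 t) - γ 0 (t - 1) • φv 0 (u.1 t - u.1 (t - 1)))
        - γ 2 t • φv 2 (u.1 t)
        + gradient (fun y : Rn N => F t y (u.2 t)) (u.1 t) = 0)
    ∧ (∀ t : ZMod T,
      (γ 1 t • φv 1 (u.2 (t + 1) - u.2 t) - γ 1 (t - 1) • φv 1 (u.2 t - u.2 (t - 1)))
        - γ 3 t • φv 3 (u.2 t)
        + gradient (fun y : Rn N => F t (u.1 t) y) (u.2 t) = 0) := by
  classical
  haveI : Fact (1 < T) := ⟨hT⟩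
  have h10 : (1 : ZMod T) ≠ 0 := one_ne_zero
  have hA := hasFDeriv_action T N γ Φv F hΦC1 hFC1 u
  have hz : dAction T N γ Φv F u = 0 := by rw [← hA.fderiv]; exact hu
  have hfd : ∀ i x (w : Rn N), fderiv ℝ (Φv i) x w = (inner ℝ (φv i x) w : ℝ) := by
    intro i x w; rw [hφgrad i x]; exact (grad_inner _ _ _).symm
  have key : ∀ h : ESpace T N, (∑ t : ZMod T,
      (γ 0 t * fderiv ℝ (Φv 0) (u.1 (t+1) - u.1 t) (h.1 (t+1) - h.1 t)
       + γ 1 t * fderiv ℝ (Φv 1) (u.2 (t+1) - u.2 t) (h.2 (t+1) - h.2 t)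
       + γ 2 t * fderiv ℝ (Φv 2) (u.1 t) (h.1 t)
       + γ 3 t * fderiv ℝ (Φv 3) (u.2 t) (h.2 t)
       - fderiv ℝ (fun p : Rn N × Rn N => F t p.1 p.2) (u.1 t, u.2 t) (h.1 t, h.2 t))) = 0 := by
    intro h
    have h0 := congrArg (fun L : ESpace T N →L[ℝ] ℝ => L h) hz
    simpa [dAction, ContinuousLinearMap.sum_apply, ContinuousLinearMap.add_apply,
      ContinuousLinearMap.sub_apply, ContinuousLinearMap.smul_apply,
      ContinuousLinearMap.comp_apply, ContinuousLinearMap.prod_apply, smul_eq_mul] using h0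
  constructor
  · -- first component
    intro t₀
    rw [← inner_self_eq_zero (𝕜 := ℝ)]
    set w : Rn N := (γ 0 t₀ • φv 0 (u.1 (t₀ + 1) - u.1 t₀)
        - γ 0 (t₀ - 1) • φv 0 (u.1 t₀ - u.1 (t₀ - 1)))
        - γ 2 t₀ • φv 2 (u.1 t₀)
        + gradient (fun y : Rn N => F t₀ y (u.2 t₀)) (u.1 t₀) with hw
    show (inner ℝ w w : ℝ) = 0
    suffices hall : ∀ v : Rn N, (inner ℝ w v : ℝ) = 0 from hall w
    intro v
    have hk := key (fun s => if s = t₀ then v else 0, 0)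
    have hk2 : (∑ t : ZMod T,
        ((if t = t₀ - 1 then γ 0 t * (inner ℝ (φv 0 (u.1 (t+1) - u.1 t)) v : ℝ) else 0)
         - (if t = t₀ then γ 0 t * (inner ℝ (φv 0 (u.1 (t+1) - u.1 t)) v : ℝ) else 0)
         + (if t = t₀ then γ 2 t * (inner ℝ (φv 2 (u.1 t)) v : ℝ)
             - fderiv ℝ (fun p : Rn N × Rn N => F t p.1 p.2) (u.1 t, u.2 t) (v, 0) else 0))) = 0 := by
      refine Eq.trans (Finset.sum_congr rfl fun t _ => ?_) hk
      have hc : (t = t₀ - 1) = (t + 1 = t₀) := propext eq_sub_iff_add_eq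
      simp only [hc]
      rcases eq_or_ne t t₀ with ht | ht
      · have ht1 : ¬(t + 1 = t₀) := by
          rw [ht]; intro hcon; exact h10 (add_eq_left.mp hcon)
        simp [ht, ht1, hfd, inner_sub_right, inner_zero_right] <;> ring
      · by_cases ht1 : t + 1 = t₀ <;>
          simp [ht, ht1, hfd, inner_sub_right, inner_zero_right, Prod.mk_zero_zero] <;> ring
    simp only [Finset.sum_add_distrib, Finset.sum_sub_distrib, Finset.sum_ite_eq',
      Finset.mem_univ, if_true, sub_add_cancel] at hk2
    have hD : (inner ℝ (gradient (fun y : Rn N => F t₀ y (u.2 t₀)) (u.1 t₀)) v : ℝ)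
        = fderiv ℝ (fun p : Rn N × Rn N => F t₀ p.1 p.2) (u.1 t₀, u.2 t₀) (v, 0) := by
      rw [grad_inner]
      have hcomp : HasFDerivAt (fun y : Rn N => F t₀ y (u.2 t₀))
          ((fderiv ℝ (fun p : Rn N × Rn N => F t₀ p.1 p.2) (u.1 t₀, u.2 t₀)).comp
            ((ContinuousLinearMap.id ℝ (Rn N)).prod 0)) (u.1 t₀) :=
        (((hFC1 t₀).differentiable one_ne_zero _).hasFDerivAt).comp (u.1 t₀)
          (HasFDerivAt.prodMk (hasFDerivAt_id _) (hasFDerivAt_const _ _))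
      rw [hcomp.fderiv]; rfl
    rw [hw]
    simp only [inner_add_left, inner_sub_left, real_inner_smul_left, hD]
    linarith [hk2]
  · -- second component
    intro t₀
    rw [← inner_self_eq_zero (𝕜 := ℝ)]
    set w : Rn N := (γ 1 t₀ • φv 1 (u.2 (t₀ + 1) - u.2 t₀)
        - γ 1 (t₀ - 1) • φv 1 (u.2 t₀ - u.2 (t₀ - 1)))
        - γ 3 t₀ • φv 3 (u.2 t₀)
        + gradient (fun y : Rn N => F t₀ (u.1 t₀) y) (u.2 t₀) with hw
    show (inner ℝ w w : ℝ) = 0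
    suffices hall : ∀ v : Rn N, (inner ℝ w v : ℝ) = 0 from hall w
    intro v
    have hk := key (0, fun s => if s = t₀ then v else 0)
    have hk2 : (∑ t : ZMod T,
        ((if t = t₀ - 1 then γ 1 t * (inner ℝ (φv 1 (u.2 (t+1) - u.2 t)) v : ℝ) else 0)
         - (if t = t₀ then γ 1 t * (inner ℝ (φv 1 (u.2 (t+1) - u.2 t)) v : ℝ) else 0)
         + (if t = t₀ then γ 3 t * (inner ℝ (φv 3 (u.2 t)) v : ℝ)
             - fderiv ℝ (fun p : Rn N × Rn N => F t p.1 p.2) (u.1 t, u.2 t) (0, v) else 0))) = 0 := by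
      refine Eq.trans (Finset.sum_congr rfl fun t _ => ?_) hk
      have hc : (t = t₀ - 1) = (t + 1 = t₀) := propext eq_sub_iff_add_eq
      simp only [hc]
      rcases eq_or_ne t t₀ with ht | ht
      · have ht1 : ¬(t + 1 = t₀) := by
          rw [ht]; intro hcon; exact h10 (add_eq_left.mp hcon)
        simp [ht, ht1, hfd, inner_sub_right, inner_zero_right] <;> ring
      · by_cases ht1 : t + 1 = t₀ <;>
          simp [ht, ht1, hfd, inner_sub_right, inner_zero_right, Prod.mk_zero_zero] <;> ring
    simp only [Finset.sum_add_distrib, Finset.sum_sub_distrib, Finset.sum_ite_eq',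
      Finset.mem_univ, if_true, sub_add_cancel] at hk2
    have hD : (inner ℝ (gradient (fun y : Rn N => F t₀ (u.1 t₀) y) (u.2 t₀)) v : ℝ)
        = fderiv ℝ (fun p : Rn N × Rn N => F t₀ p.1 p.2) (u.1 t₀, u.2 t₀) (0, v) := by
      rw [grad_inner]
      have hcomp : HasFDerivAt (fun y : Rn N => F t₀ (u.1 t₀) y)
          ((fderiv ℝ (fun p : Rn N × Rn N => F t₀ p.1 p.2) (u.1 t₀, u.2 t₀)).comp
            ((0 : Rn N →L[ℝ] Rn N).prod (ContinuousLinearMap.id ℝ (Rn N)))) (u.2 t₀) :=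
        (((hFC1 t₀).differentiable one_ne_zero _).hasFDerivAt).comp (u.2 t₀)
          (HasFDerivAt.prodMk (hasFDerivAt_const _ _) (hasFDerivAt_id _))
      rw [hcomp.fderiv]; rfl
    rw [hw]
    simp only [inner_add_left, inner_sub_left, real_inner_smul_left, hD]
    linarith [hk2]
end
end

section
/- Under hypotheses (ρ) and (A3), for all u = (u₁,u₂), v = (v₁,v₂) ∈ E: ∑_{t=1}^T [ ρ₁(t)(φ₁(Δu₁(t)) − φ₁(Δv₁(t)), Δu₁(t) − Δv₁(t)) + ρ₂(t)(φ₂(Δu₂(t)) − φ₂(Δv₂(t)), Δu₂(t) − Δv₂(t)) + ρ₃(t)(φ₃(u₁(t)) − φ₃(v₁(t)), u₁(t) − v₁(t)) + ρ₄(t)(φ₄(u₂(t)) − φ₄(v₂(t)), u₂(t) − v₂(t)) ] ≥ (1/2^{θ−1}) · min{c₁ρ₁⁻, c₂ρ₂⁻, c₃ρ₃⁻, c₄ρ₄⁻} · ‖u − v‖^θ, where ρ_i⁻ = min_{t∈ℤ[1,T]} ρ_i(t). In particular the derivative I' of the functional I is uniformly monotone on E. -/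
/- STATEMENT 9: under (ρ) and (A3), for all `u, v ∈ E`,
`∑_{t=1}^T [ρ₁(t)(φ₁(Δu₁)−φ₁(Δv₁), Δu₁−Δv₁) + ρ₂(t)(φ₂(Δu₂)−φ₂(Δv₂), Δu₂−Δv₂)
 + ρ₃(t)(φ₃(u₁)−φ₃(v₁), u₁−v₁) + ρ₄(t)(φ₄(u₂)−φ₄(v₂), u₂−v₂)]
 ≥ (1/2^{θ−1})·min{c₁ρ₁⁻, c₂ρ₂⁻, c₃ρ₃⁻, c₄ρ₄⁻}·‖u−v‖^θ`,
where `ρᵢ⁻ = min_{t∈ℤ[1,T]} ρᵢ(t)`  (uniform monotonicity of `I'`). -/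

open scoped RealInnerProductSpace

noncomputable section

/-- `u : ℤ → ℝ^N` is `T`-periodic. -/
def IsPeriodic (N : ℕ) (T : ℕ) (u : ℤ → Rn N) : Prop := ∀ t : ℤ, u (t + T) = u t

/-- Forward difference. -/
def fdiff (N : ℕ) (u : ℤ → Rn N) (t : ℤ) : Rn N := u (t + 1) - u t

/-- The norm `‖·‖_{E_T}`. -/
def normET (N T : ℕ) (θ : ℝ) (u : ℤ → Rn N) : ℝ :=
  (∑ t ∈ Finset.Icc (1 : ℤ) (T : ℤ), ‖fdiff N u t‖ ^ θ +
    ∑ t ∈ Finset.Icc (1 : ℤ) (T : ℤ), ‖u t‖ ^ θ) ^ (1 / θ)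

/-- The norm `‖u‖ = ‖u₁‖_{E_T} + ‖u₂‖_{E_T}` on `E`. -/
def normE (N T : ℕ) (θ : ℝ) (u : (ℤ → Rn N) × (ℤ → Rn N)) : ℝ :=
  normET N T θ u.1 + normET N T θ u.2

/-- `min_{t ∈ ℤ[1,T]} f(t)` (for `T ≥ 1`). -/
def minIcc (T : ℕ) (hT : 1 ≤ T) (f : ℤ → ℝ) : ℝ :=
  (Finset.Icc (1 : ℤ) (T : ℤ)).inf' (Finset.nonempty_Icc.mpr (by exact_mod_cast hT)) f

lemma two_pow_aux {a b p : ℝ} (ha : 0 ≤ a) (hb : 0 ≤ b) (hp : 1 ≤ p) :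
    (a + b) ^ p ≤ (2 : ℝ) ^ (p - 1) * (a ^ p + b ^ p) := by
  lift a to NNReal using ha
  lift b to NNReal using hb
  exact_mod_cast NNReal.rpow_add_le_mul_rpow_add_rpow a b hp

theorem uniform_monotonicity (T N : ℕ) (hT : 1 < T)
    (ρ : Fin 4 → ℤ → ℝ) (φv : Fin 4 → Rn N → Rn N)
    (θ : ℝ) (c : Fin 4 → ℝ) (hθ : 1 < θ) (hc : ∀ i, 0 < c i)
    -- hypothesis (ρ)
    (hρper : ∀ i, ∀ t : ℤ, ρ i (t + T) = ρ i t)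
    (hρpos : ∀ i, ∀ t ∈ Finset.Icc (1 : ℤ) (T : ℤ), 0 < ρ i t)
    -- hypothesis (A3)
    (hA3 : ∀ i, ∀ x y : Rn N, c i * ‖x - y‖ ^ θ ≤ ⟪φv i x - φv i y, x - y⟫)
    (u v : (ℤ → Rn N) × (ℤ → Rn N))
    (hu₁ : IsPeriodic N T u.1) (hu₂ : IsPeriodic N T u.2)
    (hv₁ : IsPeriodic N T v.1) (hv₂ : IsPeriodic N T v.2) :
    (1 / (2 : ℝ) ^ (θ - 1)) *
        min (min (c 0 * minIcc T hT.le (ρ 0)) (c 1 * minIcc T hT.le (ρ 1)))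
            (min (c 2 * minIcc T hT.le (ρ 2)) (c 3 * minIcc T hT.le (ρ 3))) *
        normE N T θ (u - v) ^ θ
      ≤ ∑ t ∈ Finset.Icc (1 : ℤ) (T : ℤ),
          (ρ 0 t * ⟪φv 0 (fdiff N u.1 t) - φv 0 (fdiff N v.1 t), fdiff N u.1 t - fdiff N v.1 t⟫
            + ρ 1 t * ⟪φv 1 (fdiff N u.2 t) - φv 1 (fdiff N v.2 t), fdiff N u.2 t - fdiff N v.2 t⟫
            + ρ 2 t * ⟪φv 2 (u.1 t) - φv 2 (v.1 t), u.1 t - v.1 t⟫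
            + ρ 3 t * ⟪φv 3 (u.2 t) - φv 3 (v.2 t), u.2 t - v.2 t⟫) := by

  classical
  set S := Finset.Icc (1 : ℤ) (T : ℤ) with hS
  have hSne : S.Nonempty := Finset.nonempty_Icc.mpr (by exact_mod_cast hT.le)
  set m := min (min (c 0 * minIcc T hT.le (ρ 0)) (c 1 * minIcc T hT.le (ρ 1)))
            (min (c 2 * minIcc T hT.le (ρ 2)) (c 3 * minIcc T hT.le (ρ 3))) with hm
  have hminpos : ∀ i, 0 < minIcc T hT.le (ρ i) := by
    intro i
    obtain ⟨t, ht, hEq⟩ := Finset.exists_mem_eq_inf' hSne (ρ i)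
    have h : minIcc T hT.le (ρ i) = ρ i t := hEq
    rw [h]; exact hρpos i t ht
  have hmle : ∀ i, m ≤ c i * minIcc T hT.le (ρ i) := by
    intro i
    fin_cases i
    · exact (min_le_left _ _).trans (min_le_left _ _)
    · exact (min_le_left _ _).trans (min_le_right _ _)
    · exact (min_le_right _ _).trans (min_le_left _ _)
    · exact (min_le_right _ _).trans (min_le_right _ _)
  have hmpos : 0 < m := by
    apply lt_min <;> apply lt_min <;> exact mul_pos (hc _) (hminpos _)
  -- termwise bound
  have key : ∀ i, ∀ t ∈ S, ∀ x y : Rn N,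
      m * ‖x - y‖ ^ θ ≤ ρ i t * ⟪φv i x - φv i y, x - y⟫ := by
    intro i t ht x y
    have h3 := hA3 i x y
    have hnn : (0:ℝ) ≤ ‖x - y‖ ^ θ := Real.rpow_nonneg (norm_nonneg _) _
    have hinn : (0:ℝ) ≤ ⟪φv i x - φv i y, x - y⟫ :=
      le_trans (mul_nonneg (hc i).le hnn) h3
    have hρle : minIcc T hT.le (ρ i) ≤ ρ i t := Finset.inf'_le _ ht
    calc m * ‖x - y‖ ^ θ ≤ (c i * minIcc T hT.le (ρ i)) * ‖x - y‖ ^ θ :=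
          mul_le_mul_of_nonneg_right (hmle i) hnn
      _ = minIcc T hT.le (ρ i) * (c i * ‖x - y‖ ^ θ) := by ring
      _ ≤ minIcc T hT.le (ρ i) * ⟪φv i x - φv i y, x - y⟫ :=
          mul_le_mul_of_nonneg_left h3 (hminpos i).le
      _ ≤ ρ i t * ⟪φv i x - φv i y, x - y⟫ :=
          mul_le_mul_of_nonneg_right hρle hinn
  set X := ∑ t ∈ S, ‖fdiff N (u - v).1 t‖ ^ θ + ∑ t ∈ S, ‖(u - v).1 t‖ ^ θ with hX
  set Y := ∑ t ∈ S, ‖fdiff N (u - v).2 t‖ ^ θ + ∑ t ∈ S, ‖(u - v).2 t‖ ^ θ with hY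
  have hXnn : 0 ≤ X := by
    apply add_nonneg <;> exact Finset.sum_nonneg fun t _ => Real.rpow_nonneg (norm_nonneg _) _
  have hYnn : 0 ≤ Y := by
    apply add_nonneg <;> exact Finset.sum_nonneg fun t _ => Real.rpow_nonneg (norm_nonneg _) _
  have hθ0 : θ ≠ 0 := by positivity
  have hNE : normE N T θ (u - v) = X ^ (1/θ) + Y ^ (1/θ) := rfl
  have h2pos : (0:ℝ) < (2:ℝ) ^ (θ - 1) := Real.rpow_pos_of_pos (by norm_num) _
  have hpow : normE N T θ (u - v) ^ θ ≤ (2:ℝ) ^ (θ - 1) * (X + Y) := by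
    rw [hNE]
    simp only [one_div]
    have := two_pow_aux (Real.rpow_nonneg hXnn θ⁻¹) (Real.rpow_nonneg hYnn θ⁻¹) hθ.le
    rwa [Real.rpow_inv_rpow hXnn hθ0, Real.rpow_inv_rpow hYnn hθ0] at this
  have hsum : m * (X + Y) ≤ ∑ t ∈ S,
          (ρ 0 t * ⟪φv 0 (fdiff N u.1 t) - φv 0 (fdiff N v.1 t), fdiff N u.1 t - fdiff N v.1 t⟫
            + ρ 1 t * ⟪φv 1 (fdiff N u.2 t) - φv 1 (fdiff N v.2 t), fdiff N u.2 t - fdiff N v.2 t⟫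
            + ρ 2 t * ⟪φv 2 (u.1 t) - φv 2 (v.1 t), u.1 t - v.1 t⟫
            + ρ 3 t * ⟪φv 3 (u.2 t) - φv 3 (v.2 t), u.2 t - v.2 t⟫) := by
    have hrw : m * (X + Y) = ∑ t ∈ S,
        (m * ‖fdiff N u.1 t - fdiff N v.1 t‖ ^ θ + m * ‖fdiff N u.2 t - fdiff N v.2 t‖ ^ θ
          + m * ‖u.1 t - v.1 t‖ ^ θ + m * ‖u.2 t - v.2 t‖ ^ θ) := by
      have e1 : ∀ t : ℤ, fdiff N (u - v).1 t = fdiff N u.1 t - fdiff N v.1 t := by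
        intro t; simp [fdiff]; abel
      have e2 : ∀ t : ℤ, fdiff N (u - v).2 t = fdiff N u.2 t - fdiff N v.2 t := by
        intro t; simp [fdiff]; abel
      have e3 : ∀ t : ℤ, (u - v).1 t = u.1 t - v.1 t := fun t => rfl
      have e4 : ∀ t : ℤ, (u - v).2 t = u.2 t - v.2 t := fun t => rfl
      simp only [hX, hY, mul_add, Finset.mul_sum, ← Finset.sum_add_distrib]
      refine Finset.sum_congr rfl fun t ht => ?_
      rw [e1, e2, e3, e4]
      ring
    rw [hrw]
    apply Finset.sum_le_sum
    intro t ht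
    have k0 := key 0 t ht (fdiff N u.1 t) (fdiff N v.1 t)
    have k1 := key 1 t ht (fdiff N u.2 t) (fdiff N v.2 t)
    have k2 := key 2 t ht (u.1 t) (v.1 t)
    have k3 := key 3 t ht (u.2 t) (v.2 t)
    linarith
  calc (1 / (2 : ℝ) ^ (θ - 1)) * m * normE N T θ (u - v) ^ θ
      ≤ (1 / (2 : ℝ) ^ (θ - 1)) * m * ((2:ℝ) ^ (θ - 1) * (X + Y)) := by
        apply mul_le_mul_of_nonneg_left hpow
        positivity
    _ = m * (X + Y) := by field_simp
    _ ≤ _ := hsum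
end
end

section
/- Under hypotheses (ρ), (A1), and (A3), for every u = (u₁,u₂) ∈ E: ∑_{t=1}^T [ ρ₁(t)(φ₁(Δu₁(t)), Δu₁(t)) + ρ₂(t)(φ₂(Δu₂(t)), Δu₂(t)) + ρ₃(t)(φ₃(u₁(t)), u₁(t)) + ρ₄(t)(φ₄(u₂(t)), u₂(t)) ] ≥ (1/2^{θ−1}) · min{c₁ρ₁⁻, c₂ρ₂⁻, c₃ρ₃⁻, c₄ρ₄⁻} · ‖u‖^θ, where ρ_i⁻ = min_{t∈ℤ[1,T]} ρ_i(t). Consequently ⟨I'(u),u⟩/‖u‖ → +∞ as ‖u‖ → ∞, i.e., I' is coercive on E. -/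
/- STATEMENT 10: under (ρ), (A1) and (A3), for every `u ∈ E`,
`∑_{t=1}^T [ρ₁(t)(φ₁(Δu₁),Δu₁) + ρ₂(t)(φ₂(Δu₂),Δu₂) + ρ₃(t)(φ₃(u₁),u₁) + ρ₄(t)(φ₄(u₂),u₂)]
 ≥ (1/2^{θ−1})·min{c₁ρ₁⁻, c₂ρ₂⁻, c₃ρ₃⁻, c₄ρ₄⁻}·‖u‖^θ`  (coercivity of `I'`). -/

open scoped RealInnerProductSpace

noncomputable section

lemma two_pow_ineq {θ : ℝ} (hθ : 1 ≤ θ) {a b : ℝ} (ha : 0 ≤ a) (hb : 0 ≤ b) :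
    (a + b) ^ θ ≤ (2 : ℝ) ^ (θ - 1) * (a ^ θ + b ^ θ) := by
  lift a to NNReal using ha
  lift b to NNReal using hb
  exact_mod_cast NNReal.rpow_add_le_mul_rpow_add_rpow a b hθ

lemma key_ineq {θ c ρmin ρt m nrm ip : ℝ} (h1 : m ≤ c * ρmin) (h2 : ρmin ≤ ρt)
    (h3 : 0 < ρmin) (h4 : c * nrm ^ θ ≤ ip) (hc : 0 < c) (hn : 0 ≤ nrm ^ θ) :
    m * nrm ^ θ ≤ ρt * ip := by
  have hip : 0 ≤ ip := le_trans (mul_nonneg hc.le hn) h4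
  nlinarith [mul_le_mul_of_nonneg_right h1 hn, mul_le_mul_of_nonneg_left h4 h3.le,
    mul_le_mul_of_nonneg_right h2 hip]

theorem coercivity_of_I' (T N : ℕ) (hT : 1 < T)
    (ρ : Fin 4 → ℤ → ℝ) (φv : Fin 4 → Rn N → Rn N) (Φv : Fin 4 → Rn N → ℝ)
    (θ : ℝ) (c : Fin 4 → ℝ) (hθ : 1 < θ) (hc : ∀ i, 0 < c i)
    -- hypothesis (ρ)
    (hρper : ∀ i, ∀ t : ℤ, ρ i (t + T) = ρ i t)
    (hρpos : ∀ i, ∀ t ∈ Finset.Icc (1 : ℤ) (T : ℤ), 0 < ρ i t)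
    -- hypothesis (A1)
    (hφhomeo : ∀ i, IsHomeomorph (φv i))
    (hφzero : ∀ i, φv i 0 = 0)
    (hφgrad : ∀ i, ∀ x : Rn N, φv i x = gradient (Φv i) x)
    (hΦC1 : ∀ i, ContDiff ℝ 1 (Φv i))
    (hΦnonneg : ∀ i, ∀ x : Rn N, 0 ≤ Φv i x)
    (hΦconv : ∀ i, StrictConvexOn ℝ Set.univ (Φv i))
    (hΦzero : ∀ i, Φv i 0 = 0)
    -- hypothesis (A3)
    (hA3 : ∀ i, ∀ x y : Rn N, c i * ‖x - y‖ ^ θ ≤ ⟪φv i x - φv i y, x - y⟫)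
    (u : (ℤ → Rn N) × (ℤ → Rn N))
    (hu₁ : IsPeriodic N T u.1) (hu₂ : IsPeriodic N T u.2) :
    (1 / (2 : ℝ) ^ (θ - 1)) *
        min (min (c 0 * minIcc T hT.le (ρ 0)) (c 1 * minIcc T hT.le (ρ 1)))
            (min (c 2 * minIcc T hT.le (ρ 2)) (c 3 * minIcc T hT.le (ρ 3))) *
        normE N T θ u ^ θ
      ≤ ∑ t ∈ Finset.Icc (1 : ℤ) (T : ℤ),
          (ρ 0 t * ⟪φv 0 (fdiff N u.1 t), fdiff N u.1 t⟫
            + ρ 1 t * ⟪φv 1 (fdiff N u.2 t), fdiff N u.2 t⟫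
            + ρ 2 t * ⟪φv 2 (u.1 t), u.1 t⟫
            + ρ 3 t * ⟪φv 3 (u.2 t), u.2 t⟫) := by
  set S := Finset.Icc (1 : ℤ) (T : ℤ) with hS
  set m := min (min (c 0 * minIcc T hT.le (ρ 0)) (c 1 * minIcc T hT.le (ρ 1)))
            (min (c 2 * minIcc T hT.le (ρ 2)) (c 3 * minIcc T hT.le (ρ 3))) with hm
  -- basic facts
  have hA3' : ∀ i, ∀ x : Rn N, c i * ‖x‖ ^ θ ≤ ⟪φv i x, x⟫ := by
    intro i x
    have h := hA3 i x 0
    simpa [hφzero i] using h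
  have hmin_pos : ∀ i, 0 < minIcc T hT.le (ρ i) := by
    intro i
    rw [minIcc]
    exact (Finset.lt_inf'_iff _).mpr fun t ht => hρpos i t ht
  have hmin_le : ∀ i, ∀ t ∈ S, minIcc T hT.le (ρ i) ≤ ρ i t := by
    intro i t ht
    exact Finset.inf'_le _ ht
  have hm_le : ∀ i : Fin 4, m ≤ c i * minIcc T hT.le (ρ i) := by
    intro i
    fin_cases i
    · exact le_trans (min_le_left _ _) (min_le_left _ _)
    · exact le_trans (min_le_left _ _) (min_le_right _ _)
    · exact le_trans (min_le_right _ _) (min_le_left _ _)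
    · exact le_trans (min_le_right _ _) (min_le_right _ _)
  have hm_pos : 0 < m := by
    have : ∀ i : Fin 4, 0 < c i * minIcc T hT.le (ρ i) :=
      fun i => mul_pos (hc i) (hmin_pos i)
    simp only [hm, lt_min_iff]
    exact ⟨⟨this 0, this 1⟩, ⟨this 2, this 3⟩⟩
  -- pointwise bound and summation
  have hpt : ∀ t ∈ S,
      m * (‖fdiff N u.1 t‖ ^ θ + ‖fdiff N u.2 t‖ ^ θ + ‖u.1 t‖ ^ θ + ‖u.2 t‖ ^ θ)
      ≤ ρ 0 t * ⟪φv 0 (fdiff N u.1 t), fdiff N u.1 t⟫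
          + ρ 1 t * ⟪φv 1 (fdiff N u.2 t), fdiff N u.2 t⟫
          + ρ 2 t * ⟪φv 2 (u.1 t), u.1 t⟫
          + ρ 3 t * ⟪φv 3 (u.2 t), u.2 t⟫ := by
    intro t ht
    have h0 := key_ineq (hm_le 0) (hmin_le 0 t ht) (hmin_pos 0) (hA3' 0 (fdiff N u.1 t))
      (hc 0) (Real.rpow_nonneg (norm_nonneg _) θ)
    have h1 := key_ineq (hm_le 1) (hmin_le 1 t ht) (hmin_pos 1) (hA3' 1 (fdiff N u.2 t))
      (hc 1) (Real.rpow_nonneg (norm_nonneg _) θ)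
    have h2 := key_ineq (hm_le 2) (hmin_le 2 t ht) (hmin_pos 2) (hA3' 2 (u.1 t))
      (hc 2) (Real.rpow_nonneg (norm_nonneg _) θ)
    have h3 := key_ineq (hm_le 3) (hmin_le 3 t ht) (hmin_pos 3) (hA3' 3 (u.2 t))
      (hc 3) (Real.rpow_nonneg (norm_nonneg _) θ)
    nlinarith [h0, h1, h2, h3]
  have hsum : m * ((∑ t ∈ S, ‖fdiff N u.1 t‖ ^ θ + ∑ t ∈ S, ‖u.1 t‖ ^ θ)
        + (∑ t ∈ S, ‖fdiff N u.2 t‖ ^ θ + ∑ t ∈ S, ‖u.2 t‖ ^ θ))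
      ≤ ∑ t ∈ S,
          (ρ 0 t * ⟪φv 0 (fdiff N u.1 t), fdiff N u.1 t⟫
            + ρ 1 t * ⟪φv 1 (fdiff N u.2 t), fdiff N u.2 t⟫
            + ρ 2 t * ⟪φv 2 (u.1 t), u.1 t⟫
            + ρ 3 t * ⟪φv 3 (u.2 t), u.2 t⟫) := by
    calc m * ((∑ t ∈ S, ‖fdiff N u.1 t‖ ^ θ + ∑ t ∈ S, ‖u.1 t‖ ^ θ)
        + (∑ t ∈ S, ‖fdiff N u.2 t‖ ^ θ + ∑ t ∈ S, ‖u.2 t‖ ^ θ))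
        = ∑ t ∈ S, m * (‖fdiff N u.1 t‖ ^ θ + ‖fdiff N u.2 t‖ ^ θ + ‖u.1 t‖ ^ θ
            + ‖u.2 t‖ ^ θ) := by
          simp only [mul_add, Finset.mul_sum, ← Finset.sum_add_distrib]
          exact Finset.sum_congr rfl fun t _ => by ring
      _ ≤ _ := Finset.sum_le_sum hpt
  -- norms
  set A₁ := ∑ t ∈ S, ‖fdiff N u.1 t‖ ^ θ + ∑ t ∈ S, ‖u.1 t‖ ^ θ with hA₁
  set A₂ := ∑ t ∈ S, ‖fdiff N u.2 t‖ ^ θ + ∑ t ∈ S, ‖u.2 t‖ ^ θ with hA₂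
  have hA₁0 : 0 ≤ A₁ := by
    apply add_nonneg <;> exact Finset.sum_nonneg fun t _ => Real.rpow_nonneg (norm_nonneg _) θ
  have hA₂0 : 0 ≤ A₂ := by
    apply add_nonneg <;> exact Finset.sum_nonneg fun t _ => Real.rpow_nonneg (norm_nonneg _) θ
  have hθ0 : θ ≠ 0 := by positivity
  have hn1 : normET N T θ u.1 ^ θ = A₁ := by
    rw [normET, ← Real.rpow_mul hA₁0, one_div, inv_mul_cancel₀ hθ0, Real.rpow_one]
  have hn2 : normET N T θ u.2 ^ θ = A₂ := by
    rw [normET, ← Real.rpow_mul hA₂0, one_div, inv_mul_cancel₀ hθ0, Real.rpow_one]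
  have ha0 : 0 ≤ normET N T θ u.1 := Real.rpow_nonneg hA₁0 _
  have hb0 : 0 ≤ normET N T θ u.2 := Real.rpow_nonneg hA₂0 _
  have h2pos : (0:ℝ) < (2:ℝ) ^ (θ - 1) := Real.rpow_pos_of_pos two_pos _
  have hab := two_pow_ineq hθ.le ha0 hb0
  calc (1 / (2 : ℝ) ^ (θ - 1)) * m * normE N T θ u ^ θ
      ≤ (1 / (2 : ℝ) ^ (θ - 1)) * m *
          ((2:ℝ) ^ (θ - 1) * (normET N T θ u.1 ^ θ + normET N T θ u.2 ^ θ)) := by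
        apply mul_le_mul_of_nonneg_left _ (by positivity)
        exact hab
    _ = m * (A₁ + A₂) := by rw [hn1, hn2]; field_simp
    _ ≤ _ := hsum
end
end
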